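/- Suppose every tour on a random point set has length at most L with probability at least 1 − 1/n!, and let Δ_min denote the minimum improvement of any improving 2-change. If P(Δ_min ≤ ε) ≤ P·ε for all ε > 0 (for some P with PL ≥ 1), then the expected length T of the longest path in the 2-opt state graph satisfies E[T] = O(P·L·n·log n). -/

import Mathlib

open MeasureTheory Nat
open scoped ENNReal

private lemma two_pow_le_sum_aux (m : ℕ) :
    2 ^ m ≤ (∑ k ∈ Finset.range m, 2 ^ k) + 1 ∧ (∑ k ∈ Finset.range m, 2 ^ k) < 2 ^ m := by
  induction m with
  | zero => simp
  | succ m ih => rw [Finset.sum_range_succ, pow_succ]; omega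

/-- Abstract form of the running-time bound via the smallest improvement. There is a universal
constant `C` such that: whenever, on a probability space, `T` is the length of the longest path
in the 2-opt state graph (so `T ≤ n!` always, and on the good event `G` — "every tour has length
at most `L`", which has probability at least `1 - 1/n!` — a path of length `t ≥ 1` forces the
minimum improvement `Δ_min ≤ L/t`), and `P(Δ_min ≤ ε) ≤ P·ε` for all `ε > 0` with `P·L ≥ 1`,
then `E[T] ≤ C·P·L·n·log n`. -/
theorem stmt16 : ∃ C : ℝ, 0 < C ∧
    ∀ (Ω : Type) (_ : MeasureSpace Ω), IsProbabilityMeasure (volume : Measure Ω) →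
    ∀ (n : ℕ), 2 ≤ n → ∀ (L P : ℝ), 0 < L → 0 < P → 1 ≤ P * L →
    ∀ (T : Ω → ℕ) (Δ : Ω → ℝ) (G : Set Ω),
      (∀ ω, T ω ≤ n !) →
      (volume : Measure Ω) Gᶜ ≤ (↑(n !) : ℝ≥0∞)⁻¹ →
      (∀ ω ∈ G, ∀ t : ℕ, 1 ≤ t → t ≤ T ω → Δ ω ≤ L / t) →
      (∀ ε : ℝ, 0 < ε → (volume : Measure Ω) {ω | Δ ω ≤ ε} ≤ ENNReal.ofReal (P * ε)) →
      ∫ ω, (T ω : ℝ) ≤ C * (P * L * n * Real.log n) := by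
  refine ⟨10, by norm_num, ?_⟩
  intro Ω _ hprob n hn L P hL hP hPL T Δ G hT hGc hpath hΔ
  have hn1 : (1:ℝ) < (n:ℝ) := by exact_mod_cast hn.trans_lt' one_lt_two |>.trans_le le_rfl
  have hlogn : 0 < Real.log n := Real.log_pos hn1
  have hl2 : (0.6931471803 : ℝ) < Real.log 2 := Real.log_two_gt_d9
  have hn2 : (2:ℝ) ≤ (n:ℝ) := by exact_mod_cast hn
  have hy1 : (1:ℝ) ≤ (n:ℝ) * Real.log n := by
    have hlog2 : Real.log 2 ≤ Real.log n := Real.log_le_log (by norm_num) hn2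
    nlinarith
  have hRHSnn : (0:ℝ) ≤ 10 * (P * L * n * Real.log n) := by positivity
  set K := Nat.log 2 (n !) with hK
  set A : ℕ → Set Ω := fun k => {ω | 2 ^ k ≤ T ω} with hA
  set B : ℕ → Set Ω := fun k => toMeasurable volume (A k) with hB
  have hBm : ∀ k, MeasurableSet (B k) := fun k => measurableSet_toMeasurable _ _
  -- pointwise bound
  have hpt : ∀ ω, (T ω : ℝ≥0∞) ≤
      ∑ k ∈ Finset.range (K+1), (2:ℝ≥0∞)^k * (B k).indicator 1 ω := by
    intro ω
    have hnat : T ω ≤ ∑ k ∈ Finset.range (K+1), 2 ^ k * (if 2 ^ k ≤ T ω then 1 else 0) := by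
      by_cases h0 : T ω = 0
      · simp [h0]
      · set j := Nat.log 2 (T ω) with hj
        have hjK : j ≤ K := Nat.log_mono_right (hT ω)
        have h1 : T ω < 2 ^ (j+1) := Nat.lt_pow_succ_log_self (by norm_num) _
        have h2 : 2 ^ (j+1) ≤ (∑ k ∈ Finset.range (j+1), 2 ^ k) + 1 :=
          (two_pow_le_sum_aux (j+1)).1
        have h3 : (∑ k ∈ Finset.range (j+1), 2 ^ k)
            = ∑ k ∈ Finset.range (j+1), 2 ^ k * (if 2 ^ k ≤ T ω then 1 else 0) := by
          refine Finset.sum_congr rfl fun k hk => ?_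
          have hk' : k ≤ j := Nat.lt_succ_iff.mp (Finset.mem_range.mp hk)
          have : (2:ℕ) ^ k ≤ T ω :=
            le_trans (Nat.pow_le_pow_right (by norm_num) hk') (Nat.pow_log_le_self 2 h0)
          simp [this]
        have h4 : (∑ k ∈ Finset.range (j+1), 2 ^ k * (if 2 ^ k ≤ T ω then 1 else 0))
            ≤ ∑ k ∈ Finset.range (K+1), 2 ^ k * (if 2 ^ k ≤ T ω then 1 else 0) :=
          Finset.sum_le_sum_of_subset (Finset.range_subset_range.mpr (by omega))
        omega
    calc (T ω : ℝ≥0∞)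
        ≤ ((∑ k ∈ Finset.range (K+1), 2 ^ k * (if 2 ^ k ≤ T ω then 1 else 0) : ℕ) : ℝ≥0∞) := by
          exact_mod_cast hnat
      _ = ∑ k ∈ Finset.range (K+1), (2:ℝ≥0∞)^k * (A k).indicator 1 ω := by
          push_cast
          refine Finset.sum_congr rfl fun k _ => ?_
          by_cases h : ω ∈ A k
          · have h' : 2 ^ k ≤ T ω := h
            simp [Set.indicator_of_mem h, h']
          · have h' : ¬ (2 ^ k ≤ T ω) := h
            simp [Set.indicator_of_notMem h, h']
      _ ≤ ∑ k ∈ Finset.range (K+1), (2:ℝ≥0∞)^k * (B k).indicator 1 ω := by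
          refine Finset.sum_le_sum fun k _ => ?_
          exact mul_le_mul_right (Set.indicator_le_indicator_of_subset
            (subset_toMeasurable _ _) (fun _ => by simp) ω) _
  -- tail bound on each A k
  have htail : ∀ k, (volume : Measure Ω) (A k)
      ≤ (↑(n !) : ℝ≥0∞)⁻¹ + ENNReal.ofReal (P * (L / 2 ^ k)) := by
    intro k
    have hsub : A k ⊆ Gᶜ ∪ {ω | Δ ω ≤ L / 2 ^ k} := by
      intro ω hω
      by_cases hG : ω ∈ G
      · right
        have := hpath ω hG (2 ^ k) Nat.one_le_two_pow hω
        have hcast : ((2 ^ k : ℕ) : ℝ) = 2 ^ k := by push_cast; ring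
        simpa [hcast] using this
      · exact Or.inl hG
    calc (volume : Measure Ω) (A k)
        ≤ (volume : Measure Ω) Gᶜ + (volume : Measure Ω) {ω | Δ ω ≤ L / 2 ^ k} :=
          le_trans (measure_mono hsub) (measure_union_le _ _)
      _ ≤ (↑(n !) : ℝ≥0∞)⁻¹ + ENNReal.ofReal (P * (L / 2 ^ k)) :=
          add_le_add hGc (hΔ _ (by positivity))
  -- lintegral bound
  have key : ∫⁻ ω, (T ω : ℝ≥0∞) ≤ ENNReal.ofReal (10 * (P * L * n * Real.log n)) := by
    have step1 : ∫⁻ ω, (T ω : ℝ≥0∞)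
        ≤ ∑ k ∈ Finset.range (K+1), (2:ℝ≥0∞)^k * (volume : Measure Ω) (A k) := by
      calc ∫⁻ ω, (T ω : ℝ≥0∞)
          ≤ ∫⁻ ω, ∑ k ∈ Finset.range (K+1), (2:ℝ≥0∞)^k * (B k).indicator 1 ω :=
            lintegral_mono hpt
        _ = ∑ k ∈ Finset.range (K+1), ∫⁻ ω, (2:ℝ≥0∞)^k * (B k).indicator 1 ω :=
            lintegral_finset_sum _ fun k _ =>
              (measurable_const.indicator (hBm k)).const_mul _
        _ = ∑ k ∈ Finset.range (K+1), (2:ℝ≥0∞)^k * (volume : Measure Ω) (A k) := by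
            refine Finset.sum_congr rfl fun k _ => ?_
            rw [lintegral_const_mul' _ _ (by simp : ((2:ℝ≥0∞)^k ≠ ⊤)),
              lintegral_indicator_one (hBm k), hB, measure_toMeasurable]
    have step2 : (∑ k ∈ Finset.range (K+1), (2:ℝ≥0∞)^k * (volume : Measure Ω) (A k))
        ≤ 2 + (K+1 : ℕ) * ENNReal.ofReal (P * L) := by
      calc ∑ k ∈ Finset.range (K+1), (2:ℝ≥0∞)^k * (volume : Measure Ω) (A k)
          ≤ ∑ k ∈ Finset.range (K+1),
              ((2:ℝ≥0∞)^k * (↑(n !) : ℝ≥0∞)⁻¹ + ENNReal.ofReal (P * L)) := by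
            refine Finset.sum_le_sum fun k _ => ?_
            have heq : (2:ℝ≥0∞)^k * ENNReal.ofReal (P * (L / 2 ^ k))
                = ENNReal.ofReal (P * L) := by
              have h2k : (2:ℝ≥0∞)^k = ENNReal.ofReal ((2:ℝ)^k) := by
                rw [ENNReal.ofReal_pow (by norm_num)]
                norm_num
              rw [h2k, ← ENNReal.ofReal_mul (by positivity)]
              congr 1
              field_simp
            calc (2:ℝ≥0∞)^k * (volume : Measure Ω) (A k)
                ≤ (2:ℝ≥0∞)^k * ((↑(n !) : ℝ≥0∞)⁻¹ + ENNReal.ofReal (P * (L / 2 ^ k))) :=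
                  mul_le_mul_right (htail k) _
              _ = (2:ℝ≥0∞)^k * (↑(n !) : ℝ≥0∞)⁻¹
                  + (2:ℝ≥0∞)^k * ENNReal.ofReal (P * (L / 2 ^ k)) := by ring
              _ = (2:ℝ≥0∞)^k * (↑(n !) : ℝ≥0∞)⁻¹ + ENNReal.ofReal (P * L) := by rw [heq]
        _ = (∑ k ∈ Finset.range (K+1), (2:ℝ≥0∞)^k) * (↑(n !) : ℝ≥0∞)⁻¹
            + (K+1 : ℕ) * ENNReal.ofReal (P * L) := by
            rw [Finset.sum_add_distrib, ← Finset.sum_mul, Finset.sum_const,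
              Finset.card_range, nsmul_eq_mul]
        _ ≤ 2 + (K+1 : ℕ) * ENNReal.ofReal (P * L) := by
            gcongr
            have hsum : (∑ k ∈ Finset.range (K+1), (2:ℕ)^k) ≤ 2 * n ! := by
              have := (two_pow_le_sum_aux (K+1)).2
              have h2K : 2 ^ K ≤ n ! := Nat.pow_log_le_self 2 (Nat.factorial_ne_zero n)
              calc (∑ k ∈ Finset.range (K+1), (2:ℕ)^k) ≤ 2 ^ (K+1) := this.le
                _ = 2 * 2 ^ K := by ring
                _ ≤ 2 * n ! := by omega
            calc (∑ k ∈ Finset.range (K+1), (2:ℝ≥0∞)^k) * (↑(n !) : ℝ≥0∞)⁻¹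
                ≤ ((2 * n ! : ℕ) : ℝ≥0∞) * (↑(n !) : ℝ≥0∞)⁻¹ := by
                  gcongr
                  calc (∑ k ∈ Finset.range (K+1), (2:ℝ≥0∞)^k)
                      = ((∑ k ∈ Finset.range (K+1), (2:ℕ)^k : ℕ) : ℝ≥0∞) := by push_cast; rfl
                    _ ≤ ((2 * n ! : ℕ) : ℝ≥0∞) := by exact_mod_cast hsum
              _ = 2 * ((↑(n !) : ℝ≥0∞) * (↑(n !) : ℝ≥0∞)⁻¹) := by push_cast; ring
              _ = 2 := by
                  rw [ENNReal.mul_inv_cancel (by exact_mod_cast Nat.factorial_ne_zero n)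
                    (by exact ENNReal.natCast_ne_top _), mul_one]
    -- real arithmetic
    have hreal : 2 + ((K:ℝ)+1) * (P * L) ≤ 10 * (P * L * n * Real.log n) := by
      have hK2 : (K:ℝ) * Real.log 2 ≤ (n:ℝ) * Real.log n := by
        have h2K : ((2:ℕ) ^ K : ℕ) ≤ n ! := Nat.pow_log_le_self 2 (Nat.factorial_ne_zero n)
        have hfact : (n ! : ℕ) ≤ n ^ n := Nat.factorial_le_pow n
        have h1 : Real.log ((2:ℝ)^K) ≤ Real.log ((n:ℝ)^n) := by
          apply Real.log_le_log (by positivity)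
          calc ((2:ℝ)^K) = ((2^K : ℕ) : ℝ) := by push_cast; ring
            _ ≤ ((n ^ n : ℕ) : ℝ) := by exact_mod_cast le_trans h2K hfact
            _ = (n:ℝ)^n := by push_cast; ring
        rwa [Real.log_pow, Real.log_pow] at h1
      have hKle : (K:ℝ) ≤ 2 * ((n:ℝ) * Real.log n) := by nlinarith [Nat.cast_nonneg (α := ℝ) K]
      nlinarith [mul_pos hP hL, Nat.cast_nonneg (α := ℝ) K]
    calc ∫⁻ ω, (T ω : ℝ≥0∞) ≤ 2 + (K+1 : ℕ) * ENNReal.ofReal (P * L) := step1.trans step2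
      _ = ENNReal.ofReal (2 + ((K:ℝ)+1) * (P * L)) := by
          have h1 : (2:ℝ≥0∞) = ENNReal.ofReal 2 := by norm_num
          have h2 : ((K+1:ℕ):ℝ≥0∞) = ENNReal.ofReal ((K:ℝ)+1) := by
            rw [show ((K:ℝ)+1) = ((K+1 : ℕ) : ℝ) by push_cast; ring, ENNReal.ofReal_natCast]
          rw [h1, h2, ← ENNReal.ofReal_mul (by positivity),
            ← ENNReal.ofReal_add (by norm_num) (by positivity)]
      _ ≤ ENNReal.ofReal (10 * (P * L * n * Real.log n)) := ENNReal.ofReal_le_ofReal hreal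
  -- conclude
  by_cases hint : Integrable (fun ω => (T ω : ℝ)) (volume : Measure Ω)
  · rw [integral_eq_lintegral_of_nonneg_ae (ae_of_all _ fun ω => Nat.cast_nonneg _)
      hint.aestronglyMeasurable]
    refine ENNReal.toReal_le_of_le_ofReal hRHSnn ?_
    calc ∫⁻ ω, ENNReal.ofReal ((T ω : ℝ)) = ∫⁻ ω, (T ω : ℝ≥0∞) := by
          simp [ENNReal.ofReal_natCast]
      _ ≤ ENNReal.ofReal (10 * (P * L * n * Real.log n)) := key
  · rw [integral_undef hint]
    exact hRHSnn
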